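/- Let δ ∈ (0,1) and define B(θ) = θ²δ·∫_0^1 s^{1−δ}/(1+θs)² ds for θ > 0. Then lim_{θ→∞} θ^{−δ}·B(θ) = δ·Γ(2−δ)·Γ(δ) = πδ(1−δ)/sin(πδ); in particular B(θ) = Θ(θ^δ) as θ → ∞. (B(θ) equals θ²·(δ/(2−δ))·₂F₁(2,2−δ;3−δ;−θ), the quantity appearing in the second moment of the conditional success probability of a Poisson cellular network with random base-station activity.) -/

import Mathlib

open Real MeasureTheory Filter Set

open Real MeasureTheory Filter Set

lemma beta_val {δ : ℝ} (h0 : 0 < δ) (h1 : δ < 1) :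
    ∫ t in Set.Ioo (0:ℝ) 1, t ^ (1 - δ) * (1 - t) ^ (δ - 1)
      = Real.Gamma (2 - δ) * Real.Gamma δ := by
  have key := Complex.Gamma_mul_Gamma_eq_betaIntegral
      (s := ((2 - δ : ℝ) : ℂ)) (t := ((δ : ℝ) : ℂ))
      (by simp; linarith) (by simpa using h0)
  have h2 : ((2 - δ : ℝ) : ℂ) + ((δ : ℝ) : ℂ) = 2 := by push_cast; ring
  have hG2 : Complex.Gamma 2 = 1 := by
    rw [show (2:ℂ) = 1 + 1 by norm_num, Complex.Gamma_add_one _ one_ne_zero,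
      Complex.Gamma_one, mul_one]
  rw [h2, hG2, one_mul] at key
  have hbi : Complex.betaIntegral ((2 - δ : ℝ) : ℂ) ((δ : ℝ) : ℂ)
      = ((∫ t in (0:ℝ)..1, t ^ (1 - δ) * (1 - t) ^ (δ - 1) : ℝ) : ℂ) := by
    rw [Complex.betaIntegral, ← intervalIntegral.integral_ofReal]
    refine intervalIntegral.integral_congr fun x hx => ?_
    rw [Set.uIcc_of_le zero_le_one] at hx
    have hx0 : (0:ℝ) ≤ x := hx.1
    have hx1 : (0:ℝ) ≤ 1 - x := by linarith [hx.2]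
    rw [show ((2 - δ : ℝ) : ℂ) - 1 = ((1 - δ : ℝ) : ℂ) by push_cast; ring,
      show ((δ : ℝ) : ℂ) - 1 = ((δ - 1 : ℝ) : ℂ) by push_cast; ring,
      show (1 : ℂ) - (x : ℂ) = ((1 - x : ℝ) : ℂ) by push_cast; ring,
      ← Complex.ofReal_cpow hx0, ← Complex.ofReal_cpow hx1, ← Complex.ofReal_mul]
  rw [hbi] at key
  have : ∫ t in (0:ℝ)..1, t ^ (1 - δ) * (1 - t) ^ (δ - 1)
      = Real.Gamma (2 - δ) * Real.Gamma δ := by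
    have := key
    rw [Complex.Gamma_ofReal, Complex.Gamma_ofReal, ← Complex.ofReal_mul] at this
    exact_mod_cast this.symm
  rw [← this, intervalIntegral.integral_of_le zero_le_one,
    MeasureTheory.integral_Ioc_eq_integral_Ioo]


lemma beta_integrable {δ : ℝ} (h0 : 0 < δ) (h1 : δ < 1) :
    IntegrableOn (fun t : ℝ => t ^ (1 - δ) * (1 - t) ^ (δ - 1)) (Set.Ioo 0 1) := by
  have hmaj : IntegrableOn (fun t : ℝ => (1 - t) ^ (δ - 1)) (Set.Ioo (0:ℝ) 1) := by
    have h := (intervalIntegral.intervalIntegrable_rpow' (a := 0) (b := 1) (r := δ - 1)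
      (by linarith)).comp_sub_left 1
    simp only [sub_zero, sub_self] at h
    have h2 := h.symm
    rwa [intervalIntegrable_iff_integrableOn_Ioo_of_le zero_le_one] at h2
  refine hmaj.mono' ?_ ?_
  · exact (by fun_prop : Measurable fun t : ℝ => t ^ (1 - δ) * (1 - t) ^ (δ - 1)).aestronglyMeasurable
  · rw [ae_restrict_iff' measurableSet_Ioo]
    filter_upwards with t ht
    have h1t : (0:ℝ) < 1 - t := by linarith [ht.2]
    have hnn : (0:ℝ) ≤ (1 - t) ^ (δ - 1) := Real.rpow_nonneg h1t.le _
    rw [Real.norm_eq_abs, abs_of_nonneg (mul_nonneg (Real.rpow_nonneg ht.1.le _) hnn)]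
    exact mul_le_of_le_one_left hnn (Real.rpow_le_one ht.1.le ht.2.le (by linarith))

lemma cov {δ : ℝ} (h0 : 0 < δ) (h1 : δ < 1) :
    IntegrableOn (fun u : ℝ => u ^ (1 - δ) / (1 + u) ^ 2) (Set.Ioi 0) ∧
    ∫ u in Set.Ioi (0:ℝ), u ^ (1 - δ) / (1 + u) ^ 2
      = ∫ t in Set.Ioo (0:ℝ) 1, t ^ (1 - δ) * (1 - t) ^ (δ - 1) := by
  set f : ℝ → ℝ := fun t => t / (1 - t) with hf
  have hder : ∀ t ∈ Set.Ioo (0:ℝ) 1, HasDerivWithinAt f (((1 - t) ^ 2)⁻¹) (Set.Ioo 0 1) t := by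
    intro t ht
    have hne : (1:ℝ) - t ≠ 0 := by intro h; have := ht.2; linarith [(by linarith : (1:ℝ) = t)]
    have : HasDerivAt f ((1 * (1 - t) - t * (0 - 1)) / (1 - t) ^ 2) t :=
      (hasDerivAt_id t).div ((hasDerivAt_const t 1).sub (hasDerivAt_id t)) hne
    have h2 : (1 * (1 - t) - t * (0 - 1)) / (1 - t) ^ 2 = ((1 - t) ^ 2)⁻¹ := by
      field_simp
      ring
    rw [h2] at this
    exact this.hasDerivWithinAt
  have hinj : Set.InjOn f (Set.Ioo 0 1) := by
    intro a ha b hb hab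
    have hna : (1:ℝ) - a ≠ 0 := by have := ha.2; intro h; linarith [(by linarith : a = 1)]
    have hnb : (1:ℝ) - b ≠ 0 := by have := hb.2; intro h; linarith [(by linarith : b = 1)]
    simp only [hf] at hab
    field_simp at hab
    nlinarith [hab]
  have himg : f '' Set.Ioo 0 1 = Set.Ioi (0:ℝ) := by
    ext u
    constructor
    · rintro ⟨t, ht, rfl⟩
      exact div_pos ht.1 (by linarith [ht.2])
    · intro hu
      have hu' : (0:ℝ) < u := hu
      have h1u : (0:ℝ) < 1 + u := by linarith
      refine ⟨u / (1 + u), ⟨div_pos hu' h1u, (div_lt_one h1u).2 (by linarith)⟩, ?_⟩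
      simp only [hf]
      rw [show 1 - u / (1 + u) = 1 / (1 + u) by field_simp; ring]
      field_simp
  have heq : Set.EqOn (fun t => |((1 - t) ^ 2)⁻¹| • ((f t) ^ (1 - δ) / (1 + f t) ^ 2))
      (fun t : ℝ => t ^ (1 - δ) * (1 - t) ^ (δ - 1)) (Set.Ioo 0 1) := by
    intro t ht
    have h1t : (0:ℝ) < 1 - t := by linarith [ht.2]
    have e1 : 1 + f t = (1 - t)⁻¹ := by simp only [hf]; field_simp; ring
    have e2 : (f t) ^ (1 - δ) = t ^ (1 - δ) / (1 - t) ^ (1 - δ) :=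
      Real.div_rpow ht.1.le h1t.le _
    have e3 : (1 - t) ^ (δ - 1) = ((1 - t) ^ (1 - δ))⁻¹ := by
      rw [show δ - 1 = -(1 - δ) by ring, Real.rpow_neg h1t.le]
    have hp : (0:ℝ) < (1 - t) ^ (1 - δ) := Real.rpow_pos_of_pos h1t _
    simp only [smul_eq_mul, e1, e2, e3]
    rw [abs_of_nonneg (by positivity)]
    field_simp
  constructor
  · rw [← himg, integrableOn_image_iff_integrableOn_abs_deriv_smul measurableSet_Ioo hder hinj]
    exact ((beta_integrable h0 h1).congr_fun (fun t ht => (heq ht).symm) measurableSet_Ioo)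
  · rw [← himg, integral_image_eq_integral_abs_deriv_smul measurableSet_Ioo hder hinj]
    exact setIntegral_congr_fun measurableSet_Ioo heq


lemma cov' {δ : ℝ} (h0 : 0 < δ) (h1 : δ < 1) :
    IntegrableOn (fun u : ℝ => u ^ (1 - δ) / (1 + u) ^ 2) (Set.Ioi 0) ∧
    ∫ u in Set.Ioi (0:ℝ), u ^ (1 - δ) / (1 + u) ^ 2 = Real.Gamma (2 - δ) * Real.Gamma δ :=
  ⟨(cov h0 h1).1, (cov h0 h1).2.trans (beta_val h0 h1)⟩

/-- For `δ ∈ (0,1)`, with `B(θ) = θ²δ ∫_0^1 s^{1-δ}/(1+θs)² ds`, one has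
`lim_{θ→∞} θ^{-δ} B(θ) = δ Γ(2-δ) Γ(δ) = πδ(1-δ)/sin(πδ)`; in particular
`B(θ) = Θ(θ^δ)` as `θ → ∞`. -/
theorem cellular_second_moment_asymptotics (δ : ℝ) (hδ : δ ∈ Set.Ioo (0:ℝ) 1)
    (B : ℝ → ℝ)
    (hB : ∀ θ : ℝ, B θ = θ ^ 2 * δ * ∫ s in Set.Ioo (0:ℝ) 1, s ^ (1 - δ) / (1 + θ * s) ^ 2) :
    Tendsto (fun θ : ℝ => θ ^ (-δ) * B θ) atTop
      (nhds (δ * Real.Gamma (2 - δ) * Real.Gamma δ)) ∧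
    δ * Real.Gamma (2 - δ) * Real.Gamma δ = π * δ * (1 - δ) / Real.sin (π * δ) := by
  obtain ⟨h0, h1⟩ := hδ
  set g : ℝ → ℝ := fun u => u ^ (1 - δ) / (1 + u) ^ 2 with hg
  obtain ⟨hgint, hgval⟩ := cov' h0 h1
  constructor
  · have hlim := MeasureTheory.intervalIntegral_tendsto_integral_Ioi 0 hgint
      (tendsto_id (α := ℝ) (x := atTop))
    have hlim2 : Tendsto (fun θ : ℝ => δ * ∫ x in (0:ℝ)..θ, g x) atTop
        (nhds (δ * Real.Gamma (2 - δ) * Real.Gamma δ)) := by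
      rw [mul_assoc, ← hgval]
      exact hlim.const_mul δ
    refine hlim2.congr' ?_
    filter_upwards [eventually_gt_atTop (0:ℝ)] with θ hθ
    have hθ0 : (0:ℝ) ≤ θ := hθ.le
    -- rescale the integral
    have e1 : ∫ s in Set.Ioo (0:ℝ) 1, s ^ (1 - δ) / (1 + θ * s) ^ 2
        = ∫ s in Set.Ioo (0:ℝ) 1, θ ^ (δ - 1) * g (θ * s) := by
      refine setIntegral_congr_fun measurableSet_Ioo fun s hs => ?_
      simp only [hg]
      rw [Real.mul_rpow hθ0 hs.1.le]
      rw [show θ ^ (δ - 1) * (θ ^ (1 - δ) * s ^ (1 - δ) / (1 + θ * s) ^ 2)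
          = (θ ^ (δ - 1) * θ ^ (1 - δ)) * (s ^ (1 - δ) / (1 + θ * s) ^ 2) by ring,
        ← Real.rpow_add hθ]
      norm_num
    have e2 : ∫ s in Set.Ioo (0:ℝ) 1, θ ^ (δ - 1) * g (θ * s)
        = θ ^ (δ - 1) * ∫ s in (0:ℝ)..1, g (θ * s) := by
      rw [intervalIntegral.integral_of_le zero_le_one,
        MeasureTheory.integral_Ioc_eq_integral_Ioo, ← integral_const_mul]
    have e3 : ∫ s in (0:ℝ)..1, g (θ * s) = θ⁻¹ * ∫ u in (0:ℝ)..θ, g u := by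
      have := intervalIntegral.integral_comp_mul_left (a := (0:ℝ)) (b := 1) (f := g)
        (hc := hθ.ne')
      rw [this]
      norm_num [smul_eq_mul]
    rw [hB θ, e1, e2, e3]
    have hpow : θ ^ (-δ) * (θ ^ 2 * δ * (θ ^ (δ - 1) * (θ⁻¹ * ∫ u in (0:ℝ)..θ, g u)))
        = (θ ^ (-δ) * θ ^ (2:ℝ) * θ ^ (δ - 1) * θ ^ (-1:ℝ)) * (δ * ∫ u in (0:ℝ)..θ, g u) := by
      rw [Real.rpow_two, Real.rpow_neg_one]
      ring
    rw [hpow, ← Real.rpow_add hθ, ← Real.rpow_add hθ, ← Real.rpow_add hθ,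
      show -δ + 2 + (δ - 1) + -1 = 0 by ring, Real.rpow_zero, one_mul]
  · have hne : (1:ℝ) - δ ≠ 0 := by linarith
    have hG : Real.Gamma (2 - δ) = (1 - δ) * Real.Gamma (1 - δ) := by
      rw [show (2:ℝ) - δ = (1 - δ) + 1 by ring, Real.Gamma_add_one hne]
    have hrefl : Real.Gamma δ * Real.Gamma (1 - δ) = π / Real.sin (π * δ) :=
      Real.Gamma_mul_Gamma_one_sub δ
    rw [hG]
    rw [show δ * ((1 - δ) * Real.Gamma (1 - δ)) * Real.Gamma δ
        = δ * (1 - δ) * (Real.Gamma δ * Real.Gamma (1 - δ)) by ring, hrefl]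
    field_simp
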